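/- arXiv:1907.11604 — 2 statements merged into one kernel-verified Lean document; each statement's English description precedes it below -/
import Mathlib

section
/- Let $u: \mathbb{R}^{n+1} \to \mathbb{R}$ be a continuous function homogeneous of degree $\alpha \in (0,1)$ (i.e., $u(\lambda x) = \lambda^\alpha u(x)$ for all $\lambda > 0$) with $u \in \dot C^\alpha(\mathbb{R}^{n+1})$ and $u(x_0) = 0$ for some $x_0 \neq 0$. Suppose the rescalings $u_k(x) = \rho_k^{-\alpha} u(x_0 + \rho_k x)$ converge locally uniformly to a function $u_0$ for some sequence $\rho_k \to 0^+$. Then $u_0$ is invariant in the direction of $x_0$: for every $x \in \mathbb{R}^{n+1}$ and every $\lambda \in \mathbb{R}$, $u_0(x + \lambda x_0) = u_0(x)$. -/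
open MeasureTheory Metric Set Filter

lemma key_est {E : Type*} [NormedAddCommGroup E] [NormedSpace ℝ E]
    (α C : ℝ) (hα0 : 0 < α) (u : E → ℝ)
    (hhom : ∀ l : ℝ, 0 < l → ∀ x, u (l • x) = l ^ α * u x)
    (hHolder : ∀ x z, |u x - u z| ≤ C * ‖x - z‖ ^ α)
    (x₀ : E) (hux₀ : u x₀ = 0) (x : E) (l r : ℝ) (hr : 0 < r)
    (hs : 0 < 1 + r * l) :
    |r ^ (-α) * u (x₀ + r • (x + l • x₀)) - r ^ (-α) * u (x₀ + r • x)| ≤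
      (1 + r * l) ^ α * (C * (r * |l| / (1 + r * l) * ‖x‖) ^ α)
        + |(1 + r * l) ^ α - 1| * (C * ‖x‖ ^ α) := by
  set s : ℝ := 1 + r * l with hs_def
  set a : E := x₀ + (r / s) • x with ha_def
  set b : E := x₀ + r • x with hb_def
  have hrw : x₀ + r • (x + l • x₀) = s • a := by
    have hsr : s * (r / s) = r := by field_simp
    rw [ha_def, smul_add s x₀, smul_smul, hsr, hs_def]
    module
  have h1 : u (x₀ + r • (x + l • x₀)) = s ^ α * u a := by rw [hrw, hhom s hs]
  have hrα : (0:ℝ) < r ^ (-α) := Real.rpow_pos_of_pos hr _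
  have hsα : (0:ℝ) ≤ s ^ α := (Real.rpow_pos_of_pos hs _).le
  -- distance between a and b
  have hab : ‖a - b‖ = r * (r * |l| / s) * ‖x‖ := by
    have : a - b = (r / s - r) • x := by rw [ha_def, hb_def]; module
    rw [this, norm_smul, Real.norm_eq_abs]
    congr 1
    rw [div_sub' hs.ne', abs_div, abs_of_pos hs]
    rw [show r - s * r = -(r * (r * l)) by rw [hs_def]; ring]
    rw [abs_neg, abs_mul, abs_of_pos hr, abs_mul, abs_of_pos hr]
    ring
  have hHab : |u a - u b| ≤ C * (r * (r * |l| / s) * ‖x‖) ^ α := by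
    have := hHolder a b; rwa [hab] at this
  have hub : |u b| ≤ C * (r * ‖x‖) ^ α := by
    have := hHolder b x₀
    rw [hux₀, sub_zero] at this
    have hbx : ‖b - x₀‖ = r * ‖x‖ := by
      rw [hb_def, add_sub_cancel_left, norm_smul, Real.norm_eq_abs, abs_of_pos hr]
    rwa [hbx] at this
  have hdecomp : r ^ (-α) * u (x₀ + r • (x + l • x₀)) - r ^ (-α) * u b
      = r ^ (-α) * (s ^ α * (u a - u b)) + r ^ (-α) * ((s ^ α - 1) * u b) := by
    rw [h1]; ring
  rw [hdecomp]
  have key1 : |r ^ (-α) * (s ^ α * (u a - u b))|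
      ≤ s ^ α * (C * (r * |l| / s * ‖x‖) ^ α) := by
    rw [abs_mul, abs_mul, abs_of_pos hrα, abs_of_nonneg hsα]
    have h2 : r ^ (-α) * (s ^ α * |u a - u b|)
        ≤ r ^ (-α) * (s ^ α * (C * (r * (r * |l| / s) * ‖x‖) ^ α)) := by
      gcongr
    refine h2.trans (le_of_eq ?_)
    have hnn1 : (0:ℝ) ≤ r * |l| / s * ‖x‖ := by positivity
    rw [show r * (r * |l| / s) * ‖x‖ = r * (r * |l| / s * ‖x‖) by ring,
      Real.mul_rpow hr.le hnn1, Real.rpow_neg hr.le]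
    field_simp
  have key2 : |r ^ (-α) * ((s ^ α - 1) * u b)| ≤ |s ^ α - 1| * (C * ‖x‖ ^ α) := by
    rw [abs_mul, abs_mul, abs_of_pos hrα]
    have h2 : r ^ (-α) * (|s ^ α - 1| * |u b|)
        ≤ r ^ (-α) * (|s ^ α - 1| * (C * (r * ‖x‖) ^ α)) := by gcongr
    refine h2.trans (le_of_eq ?_)
    rw [Real.mul_rpow hr.le (norm_nonneg x), Real.rpow_neg hr.le]
    have : (0:ℝ) < r ^ α := Real.rpow_pos_of_pos hr _
    field_simp
  calc |r ^ (-α) * (s ^ α * (u a - u b)) + r ^ (-α) * ((s ^ α - 1) * u b)|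
      ≤ |r ^ (-α) * (s ^ α * (u a - u b))| + |r ^ (-α) * ((s ^ α - 1) * u b)| :=
        abs_add_le _ _
    _ ≤ s ^ α * (C * (r * |l| / s * ‖x‖) ^ α) + |s ^ α - 1| * (C * ‖x‖ ^ α) :=
        add_le_add key1 key2

/-- Blow-ups of an `α`-homogeneous Hölder continuous function at a nonzero
zero point `x₀` are invariant in the direction of `x₀`. -/
theorem stmt_2 (n : ℕ) (α C : ℝ) (hα : α ∈ Set.Ioo (0 : ℝ) 1)
    (u u₀ : EuclideanSpace ℝ (Fin (n + 1)) → ℝ)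
    (hu_cont : Continuous u)
    (hhom : ∀ l : ℝ, 0 < l → ∀ x, u (l • x) = l ^ α * u x)
    (hHolder : ∀ x z, |u x - u z| ≤ C * ‖x - z‖ ^ α)
    (x₀ : EuclideanSpace ℝ (Fin (n + 1))) (hx₀ : x₀ ≠ 0) (hux₀ : u x₀ = 0)
    (ρ : ℕ → ℝ) (hρpos : ∀ k, 0 < ρ k) (hρ : Tendsto ρ atTop (nhds 0))
    (hconv : TendstoLocallyUniformly (fun k x => (ρ k) ^ (-α) * u (x₀ + ρ k • x)) u₀ atTop) :
    ∀ x : EuclideanSpace ℝ (Fin (n + 1)), ∀ l : ℝ, u₀ (x + l • x₀) = u₀ x := by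
  intro x l
  set s : ℕ → ℝ := fun k => 1 + ρ k * l with hs_def
  have hs_lim : Tendsto s atTop (nhds 1) := by
    have h := (tendsto_const_nhds : Tendsto (fun _ : ℕ => (1:ℝ)) atTop (nhds 1)).add
      (hρ.mul_const l)
    simpa using h
  have hs_ev : ∀ᶠ k in atTop, (0:ℝ) < s k :=
    hs_lim.eventually (eventually_gt_nhds one_pos)
  -- the bound G
  set G : ℕ → ℝ := fun k =>
    (s k) ^ α * (C * (ρ k * |l| / s k * ‖x‖) ^ α) + |(s k) ^ α - 1| * (C * ‖x‖ ^ α)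
    with hG_def
  have ht_lim : Tendsto (fun k => ρ k * |l| / s k * ‖x‖) atTop (nhds 0) := by
    have h1 : Tendsto (fun k => ρ k * |l| / s k) atTop (nhds (0 * |l| / 1)) :=
      (hρ.mul_const |l|).div hs_lim one_ne_zero
    have := h1.mul_const ‖x‖
    simpa using this
  have htα : Tendsto (fun k => (ρ k * |l| / s k * ‖x‖) ^ α) atTop (nhds 0) := by
    have hc : ContinuousAt (fun y : ℝ => y ^ α) 0 :=
      Real.continuousAt_rpow_const 0 α (Or.inr hα.1.le)
    have := hc.tendsto.comp ht_lim
    simpa [Function.comp_def, Real.zero_rpow hα.1.ne'] using this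
  have hsα : Tendsto (fun k => (s k) ^ α) atTop (nhds 1) := by
    have hc : ContinuousAt (fun y : ℝ => y ^ α) 1 :=
      Real.continuousAt_rpow_const 1 α (Or.inl one_ne_zero)
    have := hc.tendsto.comp hs_lim
    simpa [Function.comp_def] using this
  have hG_lim : Tendsto G atTop (nhds 0) := by
    have : Tendsto G atTop
        (nhds (1 * (C * 0) + |(1:ℝ) - 1| * (C * ‖x‖ ^ α))) := by
      exact (hsα.mul (tendsto_const_nhds.mul htα)).add
        (((hsα.sub tendsto_const_nhds).abs).mul tendsto_const_nhds)
    simpa using this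
  have hbound : ∀ᶠ k in atTop,
      |(ρ k) ^ (-α) * u (x₀ + ρ k • (x + l • x₀)) - (ρ k) ^ (-α) * u (x₀ + ρ k • x)|
        ≤ G k := by
    filter_upwards [hs_ev] with k hk
    exact key_est α C hα.1 u hhom hHolder x₀ hux₀ x l (ρ k) (hρpos k) hk
  have hdiff : Tendsto (fun k =>
      (ρ k) ^ (-α) * u (x₀ + ρ k • (x + l • x₀)) - (ρ k) ^ (-α) * u (x₀ + ρ k • x))
      atTop (nhds 0) := by
    rw [tendsto_zero_iff_abs_tendsto_zero]
    exact squeeze_zero' (Eventually.of_forall fun k => abs_nonneg _) hbound hG_lim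
  have hconv' := tendstoLocallyUniformlyOn_univ.mpr hconv
  have h1 := hconv'.tendsto_at (mem_univ (x + l • x₀))
  have h2 := hconv'.tendsto_at (mem_univ x)
  have h3 : Tendsto (fun k => (ρ k) ^ (-α) * u (x₀ + ρ k • (x + l • x₀)))
      atTop (nhds (0 + u₀ x)) := by
    have := hdiff.add h2
    simpa using this
  rw [zero_add] at h3
  exact tendsto_nhds_unique h1 h3
end

section
/- Let $F \subset \mathbb{R}^n$ be a set with the following property: there exist $\alpha > 0$, $t > 0$ such that for every $x \in F$ there is $r_x > 0$ so that for all $0 < r < r_x$, every subset $S \subset B(x,r) \cap F$ can be covered by finitely many balls $B(x_i, r_i)$ with centers $x_i \in S$ satisfying $\sum_i r_i^t \leq r^t/2$. Then $\mathcal{H}^t(F) = 0$. -/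
open MeasureTheory Metric Set Filter Topology

private lemma diam_ball_le' {E : Type*} [MetricSpace E] (x : E) {ρ b : ℝ} (h : ρ ≤ b) :
    EMetric.diam (ball x ρ) ≤ ENNReal.ofReal (2 * b) := by
  refine EMetric.diam_le fun y hy z hz => ?_
  rw [edist_dist]
  apply ENNReal.ofReal_le_ofReal
  rw [mem_ball] at hy hz
  calc dist y z ≤ dist y x + dist x z := dist_triangle _ _ _
    _ ≤ 2 * b := by rw [dist_comm x z]; linarith

private lemma rpow_lt_of_rpow_lt {a b t : ℝ} (ht : 0 < t) (ha : 0 ≤ a) (hb : 0 ≤ b)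
    (h : a ^ t < b ^ t) : a < b := by
  by_contra hc
  exact absurd (Real.rpow_le_rpow hb (not_lt.1 hc) ht.le) (not_le.2 h)

private lemma key_zero {E : Type*} [MetricSpace E] [MeasurableSpace E] [BorelSpace E]
    [SecondCountableTopology E] {t : ℝ} (ht : 0 < t) (D : Set E) (δ : ℝ) (hδ : 0 < δ)
    (H : ∀ x ∈ D, ∀ r : ℝ, 0 < r → r < δ → ∀ S ⊆ ball x r ∩ D,
      ∃ (m : ℕ) (c : Fin m → E) (ρ : Fin m → ℝ),
        (∀ i, c i ∈ S) ∧ (∀ i, 0 < ρ i) ∧ (S ⊆ ⋃ i, ball (c i) (ρ i)) ∧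
        ∑ i, ρ i ^ t ≤ r ^ t / 2) :
    μH[t] D = 0 := by
  apply measure_null_of_locally_null
  intro x₀ hx₀
  set r₀ : ℝ := δ / 2 with hr₀def
  have hr₀ : 0 < r₀ := by positivity
  have hr₀δ : r₀ < δ := by rw [hr₀def]; linarith
  refine ⟨D ∩ ball x₀ r₀, inter_mem_nhdsWithin D (ball_mem_nhds x₀ hr₀), ?_⟩
  set s : Set E := D ∩ ball x₀ r₀ with hsdef
  have hr₀t : 0 < r₀ ^ t := Real.rpow_pos_of_pos hr₀ t
  -- the iteration
  have iter : ∀ k : ℕ, ∃ (m : ℕ) (c : Fin m → E) (ρ : Fin m → ℝ),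
      (∀ i, c i ∈ s) ∧ (∀ i, 0 < ρ i) ∧ (s ⊆ ⋃ i, ball (c i) (ρ i)) ∧
      ∑ i, ρ i ^ t ≤ r₀ ^ t / 2 ^ (k + 1) := by
    intro k
    induction k with
    | zero =>
      obtain ⟨m, c, ρ, h1, h2, h3, h4⟩ := H x₀ hx₀ r₀ hr₀ hr₀δ s
        (fun y hy => ⟨hy.2, hy.1⟩)
      exact ⟨m, c, ρ, h1, h2, h3, by simpa using h4⟩
    | succ k ih =>
      obtain ⟨m, c, ρ, hc, hρ, hcov, hsum⟩ := ih
      have hρle : ∀ i, ρ i ^ t ≤ r₀ ^ t / 2 ^ (k + 1) := by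
        intro i
        refine le_trans ?_ hsum
        exact Finset.single_le_sum (f := fun j => ρ j ^ t)
          (fun j _ => (Real.rpow_pos_of_pos (hρ j) t).le) (Finset.mem_univ i)
      have hρδ : ∀ i, ρ i < δ := by
        intro i
        have h1 : ρ i ^ t < r₀ ^ t := by
          calc ρ i ^ t ≤ r₀ ^ t / 2 ^ (k + 1) := hρle i
            _ < r₀ ^ t := by
                have : (1:ℝ) < 2 ^ (k+1) := one_lt_pow₀ (by norm_num) (Nat.succ_ne_zero k)
                rw [div_lt_iff₀ (by positivity)]
                nlinarith
        exact lt_trans (rpow_lt_of_rpow_lt ht (hρ i).le hr₀.le h1) hr₀δ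
      -- refine each ball
      have step : ∀ i : Fin m, ∃ (m' : ℕ) (c' : Fin m' → E) (ρ' : Fin m' → ℝ),
          (∀ j, c' j ∈ s ∩ ball (c i) (ρ i)) ∧ (∀ j, 0 < ρ' j) ∧
          (s ∩ ball (c i) (ρ i) ⊆ ⋃ j, ball (c' j) (ρ' j)) ∧
          ∑ j, ρ' j ^ t ≤ ρ i ^ t / 2 := by
        intro i
        exact H (c i) (hc i).1 (ρ i) (hρ i) (hρδ i) (s ∩ ball (c i) (ρ i))
          (fun y hy => ⟨hy.2, hy.1.1⟩)
      choose m' c' ρ' hc' hρ' hcov' hsum' using step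
      let κ := Σ i : Fin m, Fin (m' i)
      let e : κ ≃ Fin (Fintype.card κ) := Fintype.equivFin κ
      refine ⟨Fintype.card κ, fun j => c' (e.symm j).1 (e.symm j).2,
        fun j => ρ' (e.symm j).1 (e.symm j).2, ?_, ?_, ?_, ?_⟩
      · intro j; exact (hc' _ _).1
      · intro j; exact hρ' _ _
      · have hU : (⋃ j, ball (c' (e.symm j).1 (e.symm j).2) (ρ' (e.symm j).1 (e.symm j).2))
            = ⋃ σ : κ, ball (c' σ.1 σ.2) (ρ' σ.1 σ.2) :=
          e.symm.iSup_comp (g := fun σ : κ => ball (c' σ.1 σ.2) (ρ' σ.1 σ.2))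
        rw [hU]
        intro y hy
        obtain ⟨i, hi⟩ := mem_iUnion.1 (hcov hy)
        obtain ⟨j, hj⟩ := mem_iUnion.1 (hcov' i ⟨hy, hi⟩)
        exact mem_iUnion.2 ⟨⟨i, j⟩, hj⟩
      · calc ∑ j : Fin (Fintype.card κ), ρ' (e.symm j).1 (e.symm j).2 ^ t
            = ∑ σ : κ, ρ' σ.1 σ.2 ^ t := Fintype.sum_equiv e.symm _ _ (fun j => rfl)
          _ = ∑ i : Fin m, ∑ j : Fin (m' i), ρ' i j ^ t := by rw [← Finset.univ_sigma_univ, Finset.sum_sigma]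
          _ ≤ ∑ i : Fin m, ρ i ^ t / 2 := Finset.sum_le_sum (fun i _ => hsum' i)
          _ = (∑ i : Fin m, ρ i ^ t) / 2 := by rw [Finset.sum_div]
          _ ≤ r₀ ^ t / 2 ^ (k + 1) / 2 := by linarith
          _ = r₀ ^ t / 2 ^ (k + 1 + 1) := by rw [div_div, ← pow_succ]
  choose m c ρ hc hρ hcov hsum using iter
  -- bound on individual radii
  set b : ℕ → ℝ := fun k => (r₀ ^ t / 2 ^ (k + 1)) ^ t⁻¹ with hbdef
  have hbpos : ∀ k, 0 < b k := fun k => Real.rpow_pos_of_pos (div_pos hr₀t (by positivity)) _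
  have hρb : ∀ k i, ρ k i ≤ b k := by
    intro k i
    have h1 : ρ k i ^ t ≤ r₀ ^ t / 2 ^ (k + 1) := by
      refine le_trans ?_ (hsum k)
      exact Finset.single_le_sum (f := fun j => ρ k j ^ t)
        (fun j _ => (Real.rpow_pos_of_pos (hρ k j) t).le) (Finset.mem_univ i)
    have h2 := Real.rpow_le_rpow (Real.rpow_pos_of_pos (hρ k i) t).le h1 (inv_pos.2 ht).le
    rwa [Real.rpow_rpow_inv (hρ k i).le ht.ne'] at h2
  -- conclusion via coverings at all scales
  have hg : Tendsto (fun k : ℕ => r₀ ^ t / 2 ^ (k + 1)) atTop (𝓝 0) := by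
    apply Tendsto.div_atTop tendsto_const_nhds
    exact (tendsto_pow_atTop_atTop_of_one_lt (by norm_num : (1:ℝ) < 2)).comp
      (tendsto_add_atTop_nat 1)
  have hb0 : Tendsto b atTop (𝓝 0) := by
    have hcont : ContinuousAt (fun x : ℝ => x ^ t⁻¹) 0 :=
      Real.continuousAt_rpow_const 0 t⁻¹ (Or.inr (inv_pos.2 ht).le)
    have := hcont.tendsto.comp hg
    simpa [hbdef, Function.comp_def, Real.zero_rpow (inv_ne_zero ht.ne')] using this
  have hr : Tendsto (fun k => ENNReal.ofReal (2 * b k)) atTop (𝓝 0) := by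
    have h2 : Tendsto (fun k => (2:ℝ) * b k) atTop (𝓝 0) := by simpa using hb0.const_mul 2
    simpa using ENNReal.tendsto_ofReal h2
  have main := Measure.hausdorffMeasure_le_liminf_sum t s (fun k => ENNReal.ofReal (2 * b k)) hr
    (fun k i => ball (c k i) (ρ k i))
    (Eventually.of_forall fun k i => diam_ball_le' _ (hρb k i))
    (Eventually.of_forall hcov)
  have hsum2 : ∀ k, ∑ i, EMetric.diam (ball (c k i) (ρ k i)) ^ t
      ≤ ENNReal.ofReal ((2:ℝ) ^ t * (r₀ ^ t / 2 ^ (k + 1))) := by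
    intro k
    calc ∑ i, EMetric.diam (ball (c k i) (ρ k i)) ^ t
        ≤ ∑ i, ENNReal.ofReal ((2 * ρ k i) ^ t) := by
          refine Finset.sum_le_sum fun i _ => ?_
          rw [← ENNReal.ofReal_rpow_of_pos (by linarith [hρ k i] : (0:ℝ) < 2 * ρ k i)]
          exact ENNReal.rpow_le_rpow (diam_ball_le' _ le_rfl) ht.le
      _ = ENNReal.ofReal (∑ i, (2 * ρ k i) ^ t) :=
          (ENNReal.ofReal_sum_of_nonneg fun i _ =>
            (Real.rpow_pos_of_pos (by linarith [hρ k i]) t).le).symm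
      _ ≤ ENNReal.ofReal ((2:ℝ) ^ t * (r₀ ^ t / 2 ^ (k + 1))) := by
          apply ENNReal.ofReal_le_ofReal
          have : ∀ i : Fin (m k), (2 * ρ k i) ^ t = 2 ^ t * ρ k i ^ t := fun i =>
            Real.mul_rpow (by norm_num) (hρ k i).le
          rw [Finset.sum_congr rfl fun i _ => this i, ← Finset.mul_sum]
          exact mul_le_mul_of_nonneg_left (hsum k) (Real.rpow_pos_of_pos two_pos t).le
  have hlim0 : Tendsto (fun k => ENNReal.ofReal ((2:ℝ) ^ t * (r₀ ^ t / 2 ^ (k + 1))))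
      atTop (𝓝 0) := by
    have h2 : Tendsto (fun k : ℕ => (2:ℝ) ^ t * (r₀ ^ t / 2 ^ (k + 1))) atTop (𝓝 0) := by
      simpa using hg.const_mul ((2:ℝ) ^ t)
    simpa using ENNReal.tendsto_ofReal h2
  refine le_antisymm (main.trans ?_) zero_le
  calc liminf (fun k => ∑ i, EMetric.diam (ball (c k i) (ρ k i)) ^ t) atTop
      ≤ liminf (fun k => ENNReal.ofReal ((2:ℝ) ^ t * (r₀ ^ t / 2 ^ (k + 1)))) atTop :=
        liminf_le_liminf (Eventually.of_forall hsum2)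
    _ = 0 := hlim0.liminf_eq

/-- The covering property (P): if every subset of a small ball around each
point of `F` can be covered by finitely many balls centered in it whose radii
satisfy `∑ ρᵢᵗ ≤ rᵗ/2`, then the `t`-dimensional Hausdorff measure of `F`
vanishes. -/
theorem stmt_5 (n : ℕ) (t : ℝ) (ht : 0 < t) (F : Set (EuclideanSpace ℝ (Fin n)))
    (hP : ∀ x ∈ F, ∃ rx > (0 : ℝ), ∀ r : ℝ, 0 < r → r < rx → ∀ S ⊆ ball x r ∩ F,
      ∃ (m : ℕ) (c : Fin m → EuclideanSpace ℝ (Fin n)) (ρ : Fin m → ℝ),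
        (∀ i, c i ∈ S) ∧ (∀ i, 0 < ρ i) ∧ (S ⊆ ⋃ i, ball (c i) (ρ i)) ∧
        ∑ i, ρ i ^ t ≤ r ^ t / 2) :
    μH[t] F = 0 := by
  classical
  choose! R hRpos hRP using hP
  set D : ℕ → Set (EuclideanSpace ℝ (Fin n)) :=
    fun k => {x ∈ F | 1 / (k + 1 : ℝ) ≤ R x} with hDdef
  have hFD : F ⊆ ⋃ k, D k := by
    intro x hx
    obtain ⟨k, hk⟩ := exists_nat_one_div_lt (hRpos x hx)
    exact mem_iUnion.2 ⟨k, hx, hk.le⟩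
  refine measure_mono_null hFD (measure_iUnion_null fun k => ?_)
  refine key_zero ht (D k) (1 / (k + 1 : ℝ)) (by positivity) ?_
  intro x hx r hr hrδ S hS
  obtain ⟨m, c, ρ, h1, h2, h3, h4⟩ := hRP x hx.1 r hr (lt_of_lt_of_le hrδ hx.2) S
    (hS.trans (inter_subset_inter_right _ (sep_subset _ _)))
  exact ⟨m, c, ρ, h1, h2, h3, h4⟩
end
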